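/- Let T be a finite tree having a pendant path P_2, i.e., there exist adjacent vertices u and v of T with deg(u) = 1 and deg(v) = 2, and let s be a nonzero real number. Then λ_max(M_T(s)) > 1 + s^2. -/

import Mathlib

open scoped Classical
open Matrix Polynomial

/-- The deformed Laplacian matrix `M_G(s) = I - s·A(G) + s²·(D(G) - I)` of a finite
simple graph `G`. -/
noncomputable def deformedLap {V : Type*} [Fintype V] (G : SimpleGraph V) (s : ℝ) :
    Matrix V V ℝ :=
  1 - s • G.adjMatrix ℝ + s ^ 2 • (Matrix.diagonal (fun v => (G.degree v : ℝ)) - 1)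

/-- The largest (real) eigenvalue of a matrix: the supremum of its real spectrum.
For a real symmetric matrix this is the maximal eigenvalue (the paper's `ρ`). -/
noncomputable def lamMax {n : Type*} [Fintype n] (M : Matrix n n ℝ) : ℝ :=
  sSup (spectrum ℝ M)

/-- Rayleigh bound for real symmetric matrices. -/
lemma rayleigh_le {n : Type*} [Fintype n] [DecidableEq n]
    {M : Matrix n n ℝ} (hM : M.IsHermitian) (x : n → ℝ) :
    x ⬝ᵥ (M *ᵥ x) ≤ sSup (spectrum ℝ M) * (x ⬝ᵥ x) := by
  classical
  set U : Matrix n n ℝ := (hM.eigenvectorUnitary : Matrix n n ℝ) with hU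
  have hstar : star U = Uᵀ := by
    ext i j; simp [Matrix.conjTranspose_apply]
  set μ : n → ℝ := hM.eigenvalues with hμ
  have hD : M = U * Matrix.diagonal μ * Uᵀ := by
    have := hM.spectral_theorem
    rw [hstar.symm]
    simpa using this
  set y : n → ℝ := Uᵀ *ᵥ x with hy
  have h1 : x ⬝ᵥ (M *ᵥ x) = y ⬝ᵥ (Matrix.diagonal μ *ᵥ y) := by
    rw [hD, ← Matrix.mulVec_mulVec, ← Matrix.mulVec_mulVec, Matrix.dotProduct_mulVec,
      ← Matrix.mulVec_transpose]
  have h2 : x ⬝ᵥ x = y ⬝ᵥ y := by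
    have hUU : U * Uᵀ = 1 := by
      rw [← hstar]
      exact (Matrix.mem_unitaryGroup_iff.mp hM.eigenvectorUnitary.2)
    calc x ⬝ᵥ x = x ⬝ᵥ ((U * Uᵀ) *ᵥ x) := by rw [hUU, Matrix.one_mulVec]
    _ = y ⬝ᵥ y := by
        rw [← Matrix.mulVec_mulVec, Matrix.dotProduct_mulVec, ← Matrix.mulVec_transpose]
  rw [h1, h2]
  have hbdd : BddAbove (spectrum ℝ M) := (Matrix.finite_spectrum M).bddAbove
  have hle : ∀ i, μ i ≤ sSup (spectrum ℝ M) := fun i =>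
    le_csSup hbdd (hM.eigenvalues_mem_spectrum_real i)
  simp only [dotProduct, Matrix.mulVec_diagonal, Finset.mul_sum]
  refine Finset.sum_le_sum fun i _ => ?_
  have : y i * (μ i * y i) = μ i * (y i * y i) := by ring
  rw [this]
  exact mul_le_mul_of_nonneg_right (hle i) (mul_self_nonneg _)

lemma deformedLap_isHermitian {V : Type*} [Fintype V] (G : SimpleGraph V) (s : ℝ) :
    (deformedLap G s).IsHermitian := by
  classical
  unfold deformedLap
  unfold Matrix.IsHermitian
  ext i j
  simp [Matrix.conjTranspose_apply, Matrix.one_apply, Matrix.diagonal_apply,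
    SimpleGraph.adjMatrix_apply, eq_comm, SimpleGraph.adj_comm]
  left
  by_cases h : i = j <;> simp [h]
  subst h; rfl

/-- If a tree `T` has a pendant path `P₂` (adjacent vertices `u, v` with
`deg u = 1`, `deg v = 2`) and `s ≠ 0`, then `λ_max(M_T(s)) > 1 + s²`. -/
theorem stmt_9 {V : Type*} [Fintype V] (T : SimpleGraph V) (hT : T.IsTree)
    (u v : V) (huv : T.Adj u v) (hu : T.degree u = 1) (hv : T.degree v = 2)
    (s : ℝ) (hs : s ≠ 0) :
    1 + s ^ 2 < lamMax (deformedLap T s) := by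
  classical
  have hne : u ≠ v := huv.ne
  set M := deformedLap T s with hM
  set x : V → ℝ := fun w => if w = u then 1 else if w = v then -s else 0 with hx
  have hxx : x ⬝ᵥ x = 1 + s ^ 2 := by
    simp only [dotProduct, hx]
    rw [Finset.sum_eq_add_of_mem u v (Finset.mem_univ u) (Finset.mem_univ v) hne]
    · simp [hne, hne.symm]; ring
    · intro w _ hw
      simp [hw.1, hw.2]
  have hMuu : M u u = 1 := by
    simp [hM, deformedLap, Matrix.one_apply, hu]
  have hMuv : M u v = -s := by
    simp [hM, deformedLap, Matrix.one_apply, hne, huv]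
  have hMvu : M v u = -s := by
    simp [hM, deformedLap, Matrix.one_apply, hne.symm, huv.symm]
  have hMvv : M v v = 1 + s ^ 2 := by
    simp [hM, deformedLap, Matrix.one_apply, hv]; ring
  have hq : x ⬝ᵥ (M *ᵥ x) = 1 + 3 * s ^ 2 + s ^ 4 := by
    have hMx : ∀ w, (M *ᵥ x) w = M w u - s * M w v := by
      intro w
      simp only [Matrix.mulVec, dotProduct, hx]
      rw [Finset.sum_eq_add_of_mem u v (Finset.mem_univ u) (Finset.mem_univ v) hne]
      · simp [hne, hne.symm]; ring
      · intro w' _ hw'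
        simp [hw'.1, hw'.2]
    simp only [dotProduct, hx]
    rw [Finset.sum_eq_add_of_mem u v (Finset.mem_univ u) (Finset.mem_univ v) hne]
    · simp only [← hx, hMx, hMuu, hMuv, hMvu, hMvv, if_pos rfl, if_neg hne.symm, if_neg hne]
      simp [hne.symm, hx]; ring
    · intro w _ hw
      simp [hw.1, hw.2]
  have hray := rayleigh_le (deformedLap_isHermitian T s) x
  rw [hq, hxx] at hray
  have hpos : (0:ℝ) < 1 + s ^ 2 := by positivity
  have hs2 : (0:ℝ) < s ^ 2 := by positivity
  have key : (1 + s ^ 2) * (1 + s ^ 2) < sSup (spectrum ℝ M) * (1 + s ^ 2) := by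
    calc (1 + s ^ 2) * (1 + s ^ 2) = 1 + 2 * s ^ 2 + s ^ 4 := by ring
    _ < 1 + 3 * s ^ 2 + s ^ 4 := by linarith
    _ ≤ sSup (spectrum ℝ M) * (1 + s ^ 2) := hray
  have := lt_of_mul_lt_mul_right key hpos.le
  simpa [lamMax, hM] using this
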